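/- (Per-phrase codelength bound) Under joint stationarity, the expected codelength of the i-th phrase in Algorithm 1 satisfies E[ℓ(w_1^i) | X_{(i−1)L+1}^{iL} = x, Y_{(i−1)L+1}^{iL} = y] ≤ ı(x|y) + ⌈log₂(1+k)⌉ + k/(((i−1)L+1)·P[X_1^L = x, Y_1^L = y]), where ı(x|y) = −log₂ P[X_1^L = x | Y_1^L = y] is the conditional information. -/

import Mathlib

open MeasureTheory
open scoped Classical
open scoped ENNReal

section Aux
variable {Ω A B : Type*} {L : ℕ} (X : ℤ → Ω → A) (Y : ℤ → Ω → B)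
  (x : Fin L → A) (y : Fin L → B)

def blkXY (r : ℤ) : Set Ω :=
  {ω | ∀ j : Fin L, X (r + (j : ℕ)) ω = x j ∧ Y (r + (j : ℕ)) ω = y j}

def blkY (r : ℤ) : Set Ω :=
  {ω | ∀ j : Fin L, Y (r + (j : ℕ)) ω = y j}

lemma blkXY_subset_blkY (r : ℤ) : blkXY X Y x y r ⊆ blkY Y y r :=
  fun ω h j => (h j).2

variable [MeasurableSpace Ω] [MeasurableSpace A] [MeasurableSingletonClass A]
  [MeasurableSpace B] [MeasurableSingletonClass B]

lemma blkXY_measurable (hmX : ∀ n, Measurable (X n)) (hmY : ∀ n, Measurable (Y n)) (r : ℤ) :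
    MeasurableSet (blkXY X Y x y r) := by
  have : blkXY X Y x y r =
      ⋂ j : Fin L, ((X (r + (j:ℕ)) ⁻¹' {x j}) ∩ (Y (r + (j:ℕ)) ⁻¹' {y j})) := by
    ext ω; simp [blkXY]
  rw [this]
  exact MeasurableSet.iInter fun j =>
    ((hmX _ (measurableSet_singleton _)).inter (hmY _ (measurableSet_singleton _)))

lemma blkY_measurable (hmY : ∀ n, Measurable (Y n)) (r : ℤ) :
    MeasurableSet (blkY Y y r) := by
  have : blkY Y y r = ⋂ j : Fin L, (Y (r + (j:ℕ)) ⁻¹' {y j}) := by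
    ext ω; simp [blkY]
  rw [this]
  exact MeasurableSet.iInter fun j => hmY _ (measurableSet_singleton _)

variable (σ : Ω → Ω)

lemma iterX (hX : ∀ n ω, X n (σ ω) = X (n + 1) ω) :
    ∀ (d : ℕ) (n : ℤ) ω, X n (σ^[d] ω) = X (n + d) ω := by
  intro d
  induction d with
  | zero => intro n ω; simp
  | succ d ih =>
      intro n ω
      rw [Function.iterate_succ_apply, ih, hX]
      norm_num; ring_nf

lemma preimage_blkXY (hX : ∀ n ω, X n (σ ω) = X (n + 1) ω)
    (hY : ∀ n ω, Y n (σ ω) = Y (n + 1) ω) (d : ℕ) (r : ℤ) :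
    (σ^[d]) ⁻¹' (blkXY X Y x y r) = blkXY X Y x y (r + d) := by
  ext ω
  simp only [Set.mem_preimage, blkXY, Set.mem_setOf_eq]
  constructor
  · intro h j
    have := h j
    rw [iterX X σ hX, iterX Y σ hY] at this
    rw [show r + (d:ℤ) + (j:ℕ) = r + (j:ℕ) + d by ring]
    exact this
  · intro h j
    rw [iterX X σ hX, iterX Y σ hY,
      show r + (j:ℕ) + (d:ℤ) = r + (d:ℤ) + (j:ℕ) by ring]
    exact h j

lemma preimage_blkY (hY : ∀ n ω, Y n (σ ω) = Y (n + 1) ω) (d : ℕ) (r : ℤ) :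
    (σ^[d]) ⁻¹' (blkY Y y r) = blkY Y y (r + d) := by
  ext ω
  simp only [Set.mem_preimage, blkY, Set.mem_setOf_eq]
  constructor
  · intro h j
    have := h j
    rw [iterX Y σ hY] at this
    rw [show r + (d:ℤ) + (j:ℕ) = r + (j:ℕ) + d by ring]
    exact this
  · intro h j
    rw [iterX Y σ hY, show r + (j:ℕ) + (d:ℤ) = r + (d:ℤ) + (j:ℕ) by ring]
    exact h j

end Aux


/-- Per-phrase codelength bound for Algorithm 1.  With `k = ⌈L log₂ |𝒜|⌉`, the expected
codelength of the `i`-th phrase, conditioned on the phrase values `(x, y)`, is at most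
`ı(x|y) + ⌈log₂(1+k)⌉ + k / (((i-1)L+1) P[X₁^L = x, Y₁^L = y])`, where
`ı(x|y) = -log₂ P[X₁^L = x | Y₁^L = y]`. -/
theorem stmt_9 {Ω A B : Type*} [MeasurableSpace Ω]
    (μ : Measure Ω) [IsProbabilityMeasure μ]
    [Fintype A] [Fintype B]
    [MeasurableSpace A] [MeasurableSingletonClass A]
    [MeasurableSpace B] [MeasurableSingletonClass B]
    (X : ℤ → Ω → A) (Y : ℤ → Ω → B)
    (hmX : ∀ n, Measurable (X n)) (hmY : ∀ n, Measurable (Y n))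
    (σ : Ω → Ω) (hσ : MeasurePreserving σ μ μ)
    (hX : ∀ n ω, X n (σ ω) = X (n + 1) ω)
    (hY : ∀ n ω, Y n (σ ω) = Y (n + 1) ω)
    (L : ℕ) (hL : 1 ≤ L) (k : ℕ)
    (hk : (k : ℤ) = ⌈(L : ℝ) * Real.logb 2 (Fintype.card A)⌉)
    (i : ℕ) (hi : 2 ≤ i)
    (x : Fin L → A) (y : Fin L → B)
    -- events for the values of the blocks at positions 1, …, L
    (Exy Ey : Set Ω)
    (hExy : Exy = {ω | ∀ j : Fin L,
      X (1 + (j : ℕ) : ℤ) ω = x j ∧ Y (1 + (j : ℕ) : ℤ) ω = y j})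
    (hEy : Ey = {ω | ∀ j : Fin L, Y (1 + (j : ℕ) : ℤ) ω = y j})
    (hpos : 0 < μ Exy)
    -- event for the values of the `i`-th phrase
    (E : Set Ω)
    (hE : E = {ω | ∀ j : Fin L,
      X (((i - 1) * L + 1 + (j : ℕ) : ℕ) : ℤ) ω = x j ∧
      Y (((i - 1) * L + 1 + (j : ℕ) : ℕ) : ℤ) ω = y j})
    -- joint / side-information matches of the `i`-th phrase at backward offset `t`
    (jm ym : ℕ → Ω → Prop)
    (hjm : ∀ t ω, jm t ω ↔ ∀ j : Fin L,
      X (((i - 1) * L + 1 + (j : ℕ) : ℕ) - (t : ℕ) : ℤ) ω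
          = X (((i - 1) * L + 1 + (j : ℕ) : ℕ) : ℤ) ω ∧
      Y (((i - 1) * L + 1 + (j : ℕ) : ℕ) - (t : ℕ) : ℤ) ω
          = Y (((i - 1) * L + 1 + (j : ℕ) : ℕ) : ℤ) ω)
    (hym : ∀ t ω, ym t ω ↔ ∀ j : Fin L,
      Y (((i - 1) * L + 1 + (j : ℕ) : ℕ) - (t : ℕ) : ℤ) ω
          = Y (((i - 1) * L + 1 + (j : ℕ) : ℕ) : ℤ) ω)
    -- the number of Y-matches up to the most recent joint match, and the codelength
    (n : Ω → ℕ)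
    (hn : ∀ ω, n ω = if ∃ t : ℕ, 1 ≤ t ∧ t ≤ (i - 1) * L ∧ jm t ω
      then Nat.card {t : ℕ | 1 ≤ t ∧
        t ≤ sInf {s : ℕ | 1 ≤ s ∧ s ≤ (i - 1) * L ∧ jm s ω} ∧ ym t ω}
      else 0)
    (len : Ω → ℕ)
    (hlen : ∀ ω, len ω = Nat.clog 2 (1 + k) +
      (if 1 ≤ n ω ∧ n ω ≤ 2 ^ k - 1 then Nat.log 2 (n ω) else k)) :
    (∫ ω in E, (len ω : ℝ) ∂μ) / (μ E).toReal
      ≤ -Real.logb 2 ((μ Exy).toReal / (μ Ey).toReal) + (Nat.clog 2 (1 + k) : ℝ)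
        + (k : ℝ) / ((((i - 1) * L + 1 : ℕ) : ℝ) * (μ Exy).toReal) := by

  classical
  -- abbreviations
  set M := (i - 1) * L with hMdef
  have hM1 : 1 ≤ M := by
    have : 1 ≤ i - 1 := by omega
    calc 1 = 1 * 1 := by ring
    _ ≤ (i-1) * L := Nat.mul_le_mul this hL
  set mz : ℤ := (M : ℤ) + 1 with hmzdef
  set Er : Set Ω := blkXY X Y x y mz with hErdef
  set Jm : ℕ → Set Ω := fun t => blkXY X Y x y (mz - t) with hJmdef
  set Ymm : ℕ → Set Ω := fun t => blkY Y y (mz - t) with hYmmdef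
  have hidx : ∀ j : Fin L, ((M + 1 + (j : ℕ) : ℕ) : ℤ) = mz + (j : ℕ) := by
    intro j; push_cast; ring
  -- identification of the events
  have hEeq : E = Er := by
    rw [hE, hErdef]
    ext ω
    simp only [blkXY, Set.mem_setOf_eq]
    constructor <;> intro h j <;> have hj := h j <;>
      [rw [hidx j] at hj; rw [hidx j]] <;> exact hj
  have hExyeq : Exy = blkXY X Y x y 1 := by
    rw [hExy]; rfl
  have hEyeq : Ey = blkY Y y 1 := by
    rw [hEy]; rfl
  -- measure invariance
  have hμshift : ∀ (d : ℕ) (r : ℤ), μ (blkXY X Y x y (r + d)) = μ (blkXY X Y x y r) := by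
    intro d r
    rw [← preimage_blkXY X Y x y σ hX hY d r]
    exact (hσ.iterate d).measure_preimage
      (blkXY_measurable X Y x y hmX hmY r).nullMeasurableSet
  have hμshiftY : ∀ (d : ℕ) (r : ℤ), μ (blkY Y y (r + d)) = μ (blkY Y y r) := by
    intro d r
    rw [← preimage_blkY Y y σ hY d r]
    exact (hσ.iterate d).measure_preimage
      (blkY_measurable Y y hmY r).nullMeasurableSet
  have hμEr : μ Er = μ Exy := by
    rw [hErdef, hExyeq, hmzdef, show (M:ℤ) + 1 = 1 + M by ring, hμshift M 1]
  -- link between jm/ym and the block sets on Er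
  have hω_val : ∀ ω, ω ∈ Er → ∀ j : Fin L,
      X (mz + (j:ℕ)) ω = x j ∧ Y (mz + (j:ℕ)) ω = y j := by
    intro ω hω j; exact hω j
  have hjm_iff : ∀ (t : ℕ) (ω : Ω), ω ∈ Er → (jm t ω ↔ ω ∈ Jm t) := by
    intro t ω hω
    rw [hjm]
    simp only [hidx]
    simp_rw [show ∀ j : Fin L, mz + (j:ℕ) - (t:ℤ) = (mz - t) + (j:ℕ) from fun j => by ring]
    simp only [hJmdef, blkXY, Set.mem_setOf_eq]
    constructor
    · intro h j
      exact ⟨(h j).1.trans (hω_val ω hω j).1, (h j).2.trans (hω_val ω hω j).2⟩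
    · intro h j
      exact ⟨(h j).1.trans (hω_val ω hω j).1.symm, (h j).2.trans (hω_val ω hω j).2.symm⟩
  have hym_iff : ∀ (t : ℕ) (ω : Ω), ω ∈ Er → (ym t ω ↔ ω ∈ Ymm t) := by
    intro t ω hω
    rw [hym]
    simp only [hidx]
    simp_rw [show ∀ j : Fin L, mz + (j:ℕ) - (t:ℤ) = (mz - t) + (j:ℕ) from fun j => by ring]
    simp only [hYmmdef, blkY, Set.mem_setOf_eq]
    constructor
    · intro h j
      exact (h j).trans (hω_val ω hω j).2
    · intro h j
      exact (h j).trans (hω_val ω hω j).2.symm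
  have hjm_ym : ∀ (t : ℕ) (ω : Ω), jm t ω → ym t ω := by
    intro t ω h
    rw [hym]; intro j; exact ((hjm t ω).1 h j).2

  -- the key families of sets
  set CC : ℕ → Set Ω := fun t => Er ∩ Ymm t ∩ ⋂ s ∈ Finset.Ico 1 t, (Jm s)ᶜ with hCCdef
  set UU : ℕ → Set Ω := fun t => Er ∩ ⋂ s ∈ Finset.Ico 1 t, (Jm s)ᶜ with hUUdef
  have hmeasBxy : ∀ r, MeasurableSet (blkXY X Y x y r) :=
    blkXY_measurable X Y x y hmX hmY
  have hmeasBy : ∀ r, MeasurableSet (blkY Y y r) := blkY_measurable Y y hmY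
  have hmeasEr : MeasurableSet Er := hmeasBxy mz
  have hmeasJm : ∀ t, MeasurableSet (Jm t) := fun t => hmeasBxy _
  have hmeasYmm : ∀ t, MeasurableSet (Ymm t) := fun t => hmeasBy _
  have hmeasCC : ∀ t, MeasurableSet (CC t) := by
    intro t
    exact (hmeasEr.inter (hmeasYmm t)).inter
      (MeasurableSet.biInter (Finset.Ico 1 t).countable_toSet
        (fun s _ => (hmeasJm s).compl))
  have hmeasUU : ∀ t, MeasurableSet (UU t) := by
    intro t
    exact hmeasEr.inter
      (MeasurableSet.biInter (Finset.Ico 1 t).countable_toSet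
        (fun s _ => (hmeasJm s).compl))
  -- shifted versions
  have hpreim : ∀ (d : ℕ) (t : ℕ),
      (σ^[d]) ⁻¹' (CC t) = blkXY X Y x y (mz + d) ∩ blkY Y y (mz - t + d) ∩
        ⋂ s ∈ Finset.Ico 1 t, (blkXY X Y x y (mz - s + d))ᶜ := by
    intro d t
    rw [hCCdef]
    simp only [Set.preimage_inter, Set.preimage_iInter, Set.preimage_compl,
      preimage_blkXY X Y x y σ hX hY, preimage_blkY Y y σ hY, hErdef, hJmdef, hYmmdef]
  have hpreimU : ∀ (d : ℕ) (t : ℕ),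
      (σ^[d]) ⁻¹' (UU t) = blkXY X Y x y (mz + d) ∩
        ⋂ s ∈ Finset.Ico 1 t, (blkXY X Y x y (mz - s + d))ᶜ := by
    intro d t
    rw [hUUdef]
    simp only [Set.preimage_inter, Set.preimage_iInter, Set.preimage_compl,
      preimage_blkXY X Y x y σ hX hY, hErdef, hJmdef]
  -- Kac-type bound for UU
  have hUUmono : ∀ s t : ℕ, s ≤ t → UU t ⊆ UU s := by
    intro s t hst
    rw [hUUdef]
    refine Set.inter_subset_inter_right _ ?_
    intro ω hω
    rw [Set.mem_iInter₂] at hω ⊢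
    intro u hu
    exact hω u (Finset.Ico_subset_Ico le_rfl hst hu)
  have hUUbound : ∀ K : ℕ, (K : ℝ≥0∞) * μ (UU K) ≤ 1 := by
    intro K
    set W : ℕ → Set Ω := fun t => blkXY X Y x y (mz + ((t:ℤ) - 1)) ∩
      ⋂ s ∈ Finset.Ico 1 t, (blkXY X Y x y (mz - (s:ℤ) + ((t:ℤ) - 1)))ᶜ with hWdef
    have hWmeas : ∀ t, MeasurableSet (W t) := by
      intro t
      exact (hmeasBxy _).inter
        (MeasurableSet.biInter (Finset.Ico 1 t).countable_toSet
          (fun s _ => (hmeasBxy _).compl))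
    have hμW : ∀ t : ℕ, 1 ≤ t → μ (W t) = μ (UU t) := by
      intro t ht
      have h1 : ((t - 1 : ℕ) : ℤ) = (t : ℤ) - 1 := by omega
      have h2 : W t = (σ^[t-1]) ⁻¹' (UU t) := by
        rw [hpreimU (t-1) t, hWdef, h1]
      rw [h2]
      exact (hσ.iterate _).measure_preimage (hmeasUU t).nullMeasurableSet
    have hWdisj : ∀ a b : ℕ, 1 ≤ a → a < b → Disjoint (W a) (W b) := by
      intro a b ha hab
      rw [Set.disjoint_left]
      intro ω hωa hωb
      have h1 : ω ∈ blkXY X Y x y (mz + ((a:ℤ)-1)) := hωa.1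
      have hs : b - a ∈ Finset.Ico 1 b := by
        rw [Finset.mem_Ico]; omega
      have h3 : ω ∈ (blkXY X Y x y (mz - ((b-a : ℕ):ℤ) + ((b:ℤ)-1)))ᶜ :=
        Set.mem_iInter₂.1 hωb.2 (b-a) hs
      have h4 : mz - ((b-a : ℕ):ℤ) + ((b:ℤ)-1) = mz + ((a:ℤ)-1) := by omega
      rw [h4] at h3
      exact h3 h1
    have hdisj : (↑(Finset.Icc 1 K) : Set ℕ).PairwiseDisjoint W := by
      intro a ha b hb hne
      rw [Finset.coe_Icc, Set.mem_Icc] at ha hb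
      rcases lt_or_gt_of_ne hne with h | h
      · exact hWdisj a b ha.1 h
      · exact (hWdisj b a hb.1 h).symm
    have hsum : ∑ t ∈ Finset.Icc 1 K, μ (W t) = μ (⋃ t ∈ Finset.Icc 1 K, W t) :=
      (measure_biUnion_finset hdisj (fun t _ => hWmeas t)).symm
    have hle1 : μ (⋃ t ∈ Finset.Icc 1 K, W t) ≤ 1 := by
      rw [← measure_univ (μ := μ)]
      exact measure_mono (Set.subset_univ _)
    calc (K : ℝ≥0∞) * μ (UU K) = ∑ _t ∈ Finset.Icc 1 K, μ (UU K) := by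
          rw [Finset.sum_const, Nat.card_Icc]
          simp [nsmul_eq_mul]
      _ ≤ ∑ t ∈ Finset.Icc 1 K, μ (W t) := by
          refine Finset.sum_le_sum fun t ht => ?_
          rw [Finset.mem_Icc] at ht
          rw [hμW t ht.1]
          exact measure_mono (hUUmono t K ht.2)
      _ ≤ 1 := hsum.trans_le hle1
  -- the conditional-Kac counting bound
  have hCCbound : ∀ K : ℕ, (∑ t ∈ Finset.Icc 1 K, μ (CC t)) ≤ μ Ey := by
    intro K
    set DD : ℕ → Set Ω := fun t => blkXY X Y x y (mz + (t:ℤ)) ∩ blkY Y y (mz - (t:ℤ) + (t:ℤ)) ∩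
      ⋂ s ∈ Finset.Ico 1 t, (blkXY X Y x y (mz - (s:ℤ) + (t:ℤ)))ᶜ with hDDdef
    have hDDmeas : ∀ t, MeasurableSet (DD t) := by
      intro t
      exact ((hmeasBxy _).inter (hmeasBy _)).inter
        (MeasurableSet.biInter (Finset.Ico 1 t).countable_toSet
          (fun s _ => (hmeasBxy _).compl))
    have hμDD : ∀ t : ℕ, μ (DD t) = μ (CC t) := by
      intro t
      have h2 : DD t = (σ^[t]) ⁻¹' (CC t) := by rw [hpreim t t, hDDdef]
      rw [h2]
      exact (hσ.iterate _).measure_preimage (hmeasCC t).nullMeasurableSet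
    have hDDsub : ∀ t : ℕ, DD t ⊆ blkY Y y mz := by
      intro t ω hω
      have := hω.1.2
      rwa [show mz - (t:ℤ) + (t:ℤ) = mz from by ring] at this
    have hDDdisj : ∀ a b : ℕ, 1 ≤ a → a < b → Disjoint (DD a) (DD b) := by
      intro a b ha hab
      rw [Set.disjoint_left]
      intro ω hωa hωb
      have h1 : ω ∈ blkXY X Y x y (mz + (a:ℤ)) := hωa.1.1
      have hs : b - a ∈ Finset.Ico 1 b := by
        rw [Finset.mem_Ico]; omega
      have h3 : ω ∈ (blkXY X Y x y (mz - ((b-a : ℕ):ℤ) + (b:ℤ)))ᶜ :=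
        Set.mem_iInter₂.1 hωb.2 (b-a) hs
      have h4 : mz - ((b-a : ℕ):ℤ) + (b:ℤ) = mz + (a:ℤ) := by omega
      rw [h4] at h3
      exact h3 h1
    have hdisj : (↑(Finset.Icc 1 K) : Set ℕ).PairwiseDisjoint DD := by
      intro a ha b hb hne
      rw [Finset.coe_Icc, Set.mem_Icc] at ha hb
      rcases lt_or_gt_of_ne hne with h | h
      · exact hDDdisj a b ha.1 h
      · exact (hDDdisj b a hb.1 h).symm
    have hμEy : μ (blkY Y y mz) = μ Ey := by
      rw [hEyeq, hmzdef, show (M:ℤ) + 1 = 1 + M from by ring, hμshiftY M 1]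
    calc ∑ t ∈ Finset.Icc 1 K, μ (CC t) = ∑ t ∈ Finset.Icc 1 K, μ (DD t) := by
          refine Finset.sum_congr rfl fun t _ => (hμDD t).symm
      _ = μ (⋃ t ∈ Finset.Icc 1 K, DD t) :=
          (measure_biUnion_finset hdisj (fun t _ => hDDmeas t)).symm
      _ ≤ μ (blkY Y y mz) := measure_mono (Set.iUnion₂_subset fun t _ => hDDsub t)
      _ = μ Ey := hμEy

  -- measurability of `n` and `len`
  have hjmS : ∀ t, MeasurableSet {ω | jm t ω} := by
    intro t
    simp_rw [hjm]
    rw [Set.setOf_forall]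
    refine MeasurableSet.iInter fun j => ?_
    rw [Set.setOf_and]
    exact (measurableSet_eq_fun (hmX _) (hmX _)).inter
      (measurableSet_eq_fun (hmY _) (hmY _))
  have hymS : ∀ t, MeasurableSet {ω | ym t ω} := by
    intro t
    simp_rw [hym]
    rw [Set.setOf_forall]
    exact MeasurableSet.iInter fun j =>
      measurableSet_eq_fun (hmY _) (hmY _)
  have htriple : ∀ t, MeasurableSet {ω | 1 ≤ t ∧ t ≤ M ∧ jm t ω} := by
    intro t
    by_cases h : 1 ≤ t ∧ t ≤ M
    · have : {ω | 1 ≤ t ∧ t ≤ M ∧ jm t ω} = {ω | jm t ω} := by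
        ext ω; simp [h.1, h.2]
      rw [this]; exact hjmS t
    · have : {ω | 1 ≤ t ∧ t ≤ M ∧ jm t ω} = ∅ := by
        ext ω
        simp only [Set.mem_setOf_eq, Set.mem_empty_iff_false, iff_false]
        intro hc
        exact h ⟨hc.1, hc.2.1⟩
      rw [this]; exact MeasurableSet.empty
  have hexS : MeasurableSet {ω | ∃ t, 1 ≤ t ∧ t ≤ M ∧ jm t ω} := by
    rw [Set.setOf_exists]
    exact MeasurableSet.iUnion htriple
  set cnt : ℕ → Ω → ℕ := fun s ω => ∑ t ∈ Finset.Icc 1 s, if ym t ω then 1 else 0 with hcnt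
  have hcnt_meas : ∀ s, Measurable (cnt s) := by
    intro s
    refine Finset.measurable_sum _ fun t _ => ?_
    exact Measurable.ite (hymS t) measurable_const measurable_const
  have hcnt_le : ∀ s ω, cnt s ω ≤ s := by
    intro s ω
    calc cnt s ω ≤ ∑ t ∈ Finset.Icc 1 s, 1 := by
          refine Finset.sum_le_sum fun t _ => ?_
          split <;> omega
      _ = s := by simp
  have hcard_eq : ∀ (s : ℕ) (ω : Ω), Nat.card {t : ℕ | 1 ≤ t ∧ t ≤ s ∧ ym t ω} = cnt s ω := by
    intro s ω
    have hset : {t : ℕ | 1 ≤ t ∧ t ≤ s ∧ ym t ω}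
        = ↑((Finset.Icc 1 s).filter fun t => ym t ω) := by
      ext t
      simp [Finset.mem_Icc, and_assoc]
    rw [hset, Nat.card_coe_set_eq, Set.ncard_coe_finset, hcnt]
    exact Finset.card_filter _ _
  have hn_eq : ∀ ω, n ω = ∑ s ∈ Finset.Icc 1 M, if (∃ t, 1 ≤ t ∧ t ≤ M ∧ jm t ω) ∧
      sInf {u | 1 ≤ u ∧ u ≤ M ∧ jm u ω} = s then cnt s ω else 0 := by
    intro ω
    rw [hn]
    by_cases hex : ∃ t, 1 ≤ t ∧ t ≤ M ∧ jm t ω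
    · simp only [hex, if_true, true_and]
      have hTmem : sInf {u | 1 ≤ u ∧ u ≤ M ∧ jm u ω} ∈ {u | 1 ≤ u ∧ u ≤ M ∧ jm u ω} :=
        Nat.sInf_mem hex
      have hTIcc : sInf {u | 1 ≤ u ∧ u ≤ M ∧ jm u ω} ∈ Finset.Icc 1 M := by
        rw [Finset.mem_Icc]; exact ⟨hTmem.1, hTmem.2.1⟩
      rw [Finset.sum_ite_eq (Finset.Icc 1 M) _ (fun s => cnt s ω), if_pos hTIcc]
      exact hcard_eq _ ω
    · simp only [hex, if_false, false_and, Finset.sum_const_zero]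
  have hn_meas : Measurable n := by
    rw [show n = fun ω => ∑ s ∈ Finset.Icc 1 M, if (∃ t, 1 ≤ t ∧ t ≤ M ∧ jm t ω) ∧
      sInf {u | 1 ≤ u ∧ u ≤ M ∧ jm u ω} = s then cnt s ω else 0 from funext hn_eq]
    refine Finset.measurable_sum _ fun s hs => ?_
    rw [Finset.mem_Icc] at hs
    refine Measurable.ite ?_ (hcnt_meas s) measurable_const
    have hQ : {ω | (∃ t, 1 ≤ t ∧ t ≤ M ∧ jm t ω) ∧
        sInf {u | 1 ≤ u ∧ u ≤ M ∧ jm u ω} = s}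
        = {ω | 1 ≤ s ∧ s ≤ M ∧ jm s ω} ∩
          ⋂ (u : ℕ) (_ : u < s), {ω | 1 ≤ u ∧ u ≤ M ∧ jm u ω}ᶜ := by
      ext ω
      simp only [Set.mem_setOf_eq, Set.mem_inter_iff, Set.mem_iInter, Set.mem_compl_iff]
      constructor
      · rintro ⟨hex, hinf⟩
        have hmem : sInf {u | 1 ≤ u ∧ u ≤ M ∧ jm u ω} ∈ {u | 1 ≤ u ∧ u ≤ M ∧ jm u ω} :=
          Nat.sInf_mem hex
        rw [hinf] at hmem
        refine ⟨hmem, fun u hu => ?_⟩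
        have hlt : u < sInf {u | 1 ≤ u ∧ u ≤ M ∧ jm u ω} := by rw [hinf]; exact hu
        exact Nat.notMem_of_lt_sInf hlt
      · rintro ⟨hmem, hlow⟩
        refine ⟨⟨s, hmem⟩, ?_⟩
        have h1 : sInf {u | 1 ≤ u ∧ u ≤ M ∧ jm u ω} ≤ s := Nat.sInf_le hmem
        have h2 : sInf {u | 1 ≤ u ∧ u ≤ M ∧ jm u ω} ∈ {u | 1 ≤ u ∧ u ≤ M ∧ jm u ω} :=
          Nat.sInf_mem ⟨s, hmem⟩
        by_contra hne
        exact hlow _ (lt_of_le_of_ne h1 (fun h => hne h)) h2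
    rw [hQ]
    exact (htriple s).inter
      (MeasurableSet.iInter fun u => MeasurableSet.iInter fun _ => (htriple u).compl)
  have hlen_meas : Measurable len := by
    rw [show len = (fun v : ℕ => Nat.clog 2 (1 + k) +
      if 1 ≤ v ∧ v ≤ 2 ^ k - 1 then Nat.log 2 v else k) ∘ n from funext hlen]
    exact measurable_from_top.comp hn_meas
  set NN : Ω → ℕ := fun ω => max (n ω) 1 with hNN
  have hNN_meas : Measurable NN := by
    rw [show NN = (fun v : ℕ => max v 1) ∘ n from funext fun ω => by rw [hNN]; rfl]
    exact measurable_from_top.comp hn_meas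
  have hn_le : ∀ ω, n ω ≤ M := by
    intro ω
    by_cases hex : ∃ t, 1 ≤ t ∧ t ≤ M ∧ jm t ω
    · rw [hn, if_pos hex, hcard_eq]
      have hTmem : sInf {u | 1 ≤ u ∧ u ≤ M ∧ jm u ω} ∈ {u | 1 ≤ u ∧ u ≤ M ∧ jm u ω} :=
        Nat.sInf_mem hex
      exact le_trans (hcnt_le _ ω) hTmem.2.1
    · rw [hn, if_neg hex]
      exact Nat.zero_le M

  -- n is positive whenever a joint match exists
  have hn_pos : ∀ ω, (∃ t, 1 ≤ t ∧ t ≤ M ∧ jm t ω) → 1 ≤ n ω := by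
    intro ω hex
    rw [hn, if_pos hex, hcard_eq]
    have hTmem : sInf {u | 1 ≤ u ∧ u ≤ M ∧ jm u ω} ∈ {u | 1 ≤ u ∧ u ≤ M ∧ jm u ω} :=
      Nat.sInf_mem hex
    have hymT : ym (sInf {u | 1 ≤ u ∧ u ≤ M ∧ jm u ω}) ω := hjm_ym _ ω hTmem.2.2
    have hTIcc : sInf {u | 1 ≤ u ∧ u ≤ M ∧ jm u ω}
        ∈ Finset.Icc 1 (sInf {u | 1 ≤ u ∧ u ≤ M ∧ jm u ω}) := by
      rw [Finset.mem_Icc]; exact ⟨hTmem.1, le_rfl⟩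
    simp only [hcnt]
    calc 1 = if ym (sInf {u | 1 ≤ u ∧ u ≤ M ∧ jm u ω}) ω then 1 else 0 := by
          rw [if_pos hymT]
      _ ≤ ∑ t ∈ Finset.Icc 1 (sInf {u | 1 ≤ u ∧ u ≤ M ∧ jm u ω}),
            if ym t ω then 1 else 0 :=
          Finset.single_le_sum (f := fun t => if ym t ω then (1:ℕ) else 0)
            (fun t _ => Nat.zero_le _) hTIcc
  -- pointwise counting bound
  have hptC : ∀ K : ℕ, M ≤ K → ∀ ω ∈ Er, NN ω ≤
      (∑ t ∈ Finset.Icc 1 K, (CC t).indicator (fun _ => (1:ℕ)) ω) +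
        M * ((UU (K+1)).indicator (fun _ => (1:ℕ)) ω) := by
    intro K hMK ω hω
    by_cases hex : ∃ t, 1 ≤ t ∧ t ≤ M ∧ jm t ω
    · have h1n := hn_pos ω hex
      have hNNn : NN ω = n ω := by rw [hNN]; exact max_eq_left h1n
      set T := sInf {u | 1 ≤ u ∧ u ≤ M ∧ jm u ω} with hT
      have hTmem : T ∈ {u | 1 ≤ u ∧ u ≤ M ∧ jm u ω} := Nat.sInf_mem hex
      have hnval : n ω = cnt T ω := by rw [hn, if_pos hex, hcard_eq]
      have hstep : ∀ t ∈ Finset.Icc 1 T,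
          (if ym t ω then 1 else 0) ≤ (CC t).indicator (fun _ => (1:ℕ)) ω := by
        intro t ht
        rw [Finset.mem_Icc] at ht
        by_cases hymt : ym t ω
        · have hCCt : ω ∈ CC t := by
            rw [hCCdef]
            refine ⟨⟨hω, (hym_iff t ω hω).1 hymt⟩, ?_⟩
            rw [Set.mem_iInter₂]
            intro u hu
            rw [Finset.mem_Ico] at hu
            intro hJu
            have hjmu : jm u ω := (hjm_iff u ω hω).2 hJu
            have humem : u ∈ {u | 1 ≤ u ∧ u ≤ M ∧ jm u ω} :=
              ⟨hu.1, le_trans (le_of_lt (lt_of_lt_of_le hu.2 ht.2)) hTmem.2.1, hjmu⟩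
            have := Nat.sInf_le humem
            omega
          rw [if_pos hymt, Set.indicator_of_mem hCCt]
        · rw [if_neg hymt]; exact Nat.zero_le _
      calc NN ω = cnt T ω := by rw [hNNn, hnval]
        _ ≤ ∑ t ∈ Finset.Icc 1 T, (CC t).indicator (fun _ => (1:ℕ)) ω := by
            rw [hcnt]; exact Finset.sum_le_sum hstep
        _ ≤ ∑ t ∈ Finset.Icc 1 K, (CC t).indicator (fun _ => (1:ℕ)) ω :=
            Finset.sum_le_sum_of_subset
              (Finset.Icc_subset_Icc le_rfl (le_trans hTmem.2.1 hMK))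
        _ ≤ _ := Nat.le_add_right _ _
    · have hn0 : n ω = 0 := by rw [hn, if_neg hex]
      have hNN1 : NN ω = 1 := by rw [hNN]; simp [hn0]
      by_cases hU : ω ∈ UU (K+1)
      · calc NN ω = 1 := hNN1
          _ ≤ M * 1 := by omega
          _ ≤ _ := by rw [Set.indicator_of_mem hU]; exact Nat.le_add_left _ _
      · -- there is a block match within distance K; take the least one
        have hexJ : ∃ s, 1 ≤ s ∧ s ≤ K ∧ ω ∈ Jm s := by
          by_contra hno
          push_neg at hno
          refine hU ?_
          rw [hUUdef]
          refine ⟨hω, ?_⟩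
          rw [Set.mem_iInter₂]
          intro u hu
          rw [Finset.mem_Ico] at hu
          intro hJu
          exact (hno u hu.1 (by omega)) hJu
        set T0 := sInf {s | 1 ≤ s ∧ s ≤ K ∧ ω ∈ Jm s} with hT0
        have hT0mem : T0 ∈ {s | 1 ≤ s ∧ s ≤ K ∧ ω ∈ Jm s} := Nat.sInf_mem hexJ
        have hCCT0 : ω ∈ CC T0 := by
          rw [hCCdef]
          refine ⟨⟨hω, blkXY_subset_blkY X Y x y _ hT0mem.2.2⟩, ?_⟩
          rw [Set.mem_iInter₂]
          intro u hu
          rw [Finset.mem_Ico] at hu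
          intro hJu
          have humem : u ∈ {s | 1 ≤ s ∧ s ≤ K ∧ ω ∈ Jm s} :=
            ⟨hu.1, le_trans (le_of_lt hu.2) hT0mem.2.1, hJu⟩
          have := Nat.sInf_le humem
          omega
        have hT0Icc : T0 ∈ Finset.Icc 1 K := by
          rw [Finset.mem_Icc]; exact ⟨hT0mem.1, hT0mem.2.1⟩
        calc NN ω = 1 := hNN1
          _ = (CC T0).indicator (fun _ => (1:ℕ)) ω := by rw [Set.indicator_of_mem hCCT0]
          _ ≤ ∑ t ∈ Finset.Icc 1 K, (CC t).indicator (fun _ => (1:ℕ)) ω :=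
              Finset.single_le_sum (f := fun t => (CC t).indicator (fun _ => (1:ℕ)) ω)
                (fun t _ => Nat.zero_le _) hT0Icc
          _ ≤ _ := Nat.le_add_right _ _
  -- comparison of Nat.log with logb
  have hlogle : ∀ v : ℕ, 1 ≤ v → (Nat.log 2 v : ℝ) ≤ Real.logb 2 v := by
    intro v hv
    have h2 : (((2:ℕ) ^ (Nat.log 2 v) : ℕ) : ℝ) ≤ (v : ℝ) := by
      exact_mod_cast Nat.pow_log_le_self 2 (by omega)
    have hpos2 : (0:ℝ) < (((2:ℕ) ^ (Nat.log 2 v) : ℕ) : ℝ) := by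
      have : 0 < (2:ℕ) ^ (Nat.log 2 v) := Nat.pow_pos (by norm_num)
      exact_mod_cast this
    calc (Nat.log 2 v : ℝ) = Real.logb 2 (((2:ℕ) ^ (Nat.log 2 v) : ℕ) : ℝ) := by
          push_cast
          rw [Real.logb_pow]
          simp
      _ ≤ Real.logb 2 v := Real.logb_le_logb_of_le one_lt_two hpos2 h2
  -- pointwise length bound
  have hptE : ∀ ω ∈ Er, (len ω : ℝ) ≤ (Nat.clog 2 (1 + k) : ℝ) +
      Real.logb 2 (NN ω) + (k:ℝ) * ((UU (M+1)).indicator (fun _ => (1:ℝ)) ω) := by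
    intro ω hω
    have hNN1le : 1 ≤ NN ω := by rw [hNN]; exact le_max_right _ _
    have hlogbNN : (0:ℝ) ≤ Real.logb 2 (NN ω) := by
      apply Real.logb_nonneg one_lt_two
      exact_mod_cast hNN1le
    rw [hlen]
    push_cast
    by_cases hex : ∃ t, 1 ≤ t ∧ t ≤ M ∧ jm t ω
    · have h1n := hn_pos ω hex
      have hNNn : NN ω = n ω := by rw [hNN]; exact max_eq_left h1n
      have hite : (0:ℝ) ≤ (k:ℝ) * ((UU (M+1)).indicator (fun _ => (1:ℝ)) ω) :=
        mul_nonneg (by positivity) (Set.indicator_nonneg (fun _ _ => by norm_num) ω)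
      have h4 : Real.logb 2 ((n ω : ℝ)) = Real.logb 2 ((NN ω : ℝ)) := by rw [hNNn]
      by_cases hc : 1 ≤ n ω ∧ n ω ≤ 2 ^ k - 1
      · rw [if_pos hc]
        have := hlogle (n ω) h1n
        linarith
      · rw [if_neg hc]
        have h2k : 1 ≤ 2 ^ k := Nat.one_le_two_pow
        have hge : 2 ^ k ≤ n ω := by omega
        have hklog : k ≤ Nat.log 2 (n ω) :=
          (Nat.le_log_iff_pow_le one_lt_two (by omega)).2 hge
        have h3 := hlogle (n ω) h1n
        have h5 : (k:ℝ) ≤ (Nat.log 2 (n ω) : ℝ) := by exact_mod_cast hklog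
        linarith
    · have hn0 : n ω = 0 := by rw [hn, if_neg hex]
      have hnotc : ¬ (1 ≤ n ω ∧ n ω ≤ 2 ^ k - 1) := by omega
      rw [if_neg hnotc]
      have hUm : ω ∈ UU (M+1) := by
        rw [hUUdef]
        refine ⟨hω, ?_⟩
        rw [Set.mem_iInter₂]
        intro u hu
        rw [Finset.mem_Ico] at hu
        intro hJu
        exact hex ⟨u, hu.1, by omega, (hjm_iff u ω hω).2 hJu⟩
      rw [Set.indicator_of_mem hUm]
      linarith

  -- real quantities
  set pr := (μ Exy).toReal with hpr
  set qr := (μ Ey).toReal with hqr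
  have hprpos : 0 < pr := ENNReal.toReal_pos hpos.ne' (measure_ne_top μ _)
  have hsub : Exy ⊆ Ey := by rw [hExy, hEy]; intro ω h j; exact (h j).2
  have hpq : pr ≤ qr :=
    (ENNReal.toReal_le_toReal (measure_ne_top μ _) (measure_ne_top μ _)).2 (measure_mono hsub)
  have hqpos : 0 < qr := lt_of_lt_of_le hprpos hpq
  have hμErR : (μ Er).toReal = pr := by rw [hμEr]
  -- integrability helper
  have hintb : ∀ (f : Ω → ℝ) (C : ℝ), Measurable f → (∀ ω, |f ω| ≤ C) →
      IntegrableOn f Er μ := by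
    intro f C hf hC
    refine Integrable.mono' (integrable_const C) hf.aestronglyMeasurable ?_
    exact Filter.Eventually.of_forall fun ω => by
      rw [Real.norm_eq_abs]; exact hC ω
  have hNN_lb : ∀ ω, (1:ℝ) ≤ (NN ω : ℝ) := by
    intro ω
    have : 1 ≤ NN ω := by rw [hNN]; exact le_max_right _ _
    exact_mod_cast this
  have hNN_ub : ∀ ω, (NN ω : ℝ) ≤ (M:ℝ) := by
    intro ω
    have h1 := hn_le ω
    have : NN ω ≤ M := by rw [hNN]; exact max_le h1 hM1
    exact_mod_cast this
  have hNN_int : IntegrableOn (fun ω => (NN ω : ℝ)) Er μ := by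
    refine hintb _ (M:ℝ) (measurable_from_top.comp hNN_meas) fun ω => ?_
    rw [abs_of_nonneg (by positivity)]
    exact hNN_ub ω
  have hlen_int : IntegrableOn (fun ω => (len ω : ℝ)) Er μ := by
    refine hintb _ ((Nat.clog 2 (1+k) + k + Nat.log 2 M : ℕ) : ℝ)
      (measurable_from_top.comp hlen_meas) fun ω => ?_
    rw [abs_of_nonneg (by positivity)]
    have h1 : Nat.log 2 (n ω) ≤ Nat.log 2 M := Nat.log_mono_right (hn_le ω)
    have : len ω ≤ Nat.clog 2 (1+k) + k + Nat.log 2 M := by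
      rw [hlen]
      by_cases hcc : 1 ≤ n ω ∧ n ω ≤ 2 ^ k - 1
      · rw [if_pos hcc]
        have h2 : Nat.log 2 (n ω) ≤ k + Nat.log 2 M := le_trans h1 (Nat.le_add_left _ _)
        calc Nat.clog 2 (1+k) + Nat.log 2 (n ω) ≤ Nat.clog 2 (1+k) + (k + Nat.log 2 M) :=
              Nat.add_le_add le_rfl h2
          _ = Nat.clog 2 (1+k) + k + Nat.log 2 M := by ring
      · rw [if_neg hcc]
        exact Nat.le_add_right _ _
    exact_mod_cast this
  have hlog_meas : Measurable fun ω => Real.log ((NN ω : ℕ) : ℝ) :=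
    Measurable.comp (measurable_from_top (f := fun v : ℕ => Real.log (v:ℝ))) hNN_meas
  have hlog_int : IntegrableOn (fun ω => Real.log ((NN ω : ℕ) : ℝ)) Er μ := by
    refine hintb _ (Real.log (M:ℝ)) hlog_meas fun ω => ?_
    rw [abs_of_nonneg (Real.log_nonneg (hNN_lb ω))]
    exact Real.log_le_log (by linarith [hNN_lb ω]) (hNN_ub ω)
  have hlogb_meas : Measurable fun ω => Real.logb 2 ((NN ω : ℕ) : ℝ) :=
    Measurable.comp (measurable_from_top (f := fun v : ℕ => Real.logb 2 (v:ℝ))) hNN_meas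
  have hlogb_int : IntegrableOn (fun ω => Real.logb 2 ((NN ω : ℕ) : ℝ)) Er μ := by
    refine hintb _ (Real.logb 2 (M:ℝ)) hlogb_meas fun ω => ?_
    rw [abs_of_nonneg (Real.logb_nonneg one_lt_two (hNN_lb ω))]
    exact Real.logb_le_logb_of_le one_lt_two (by linarith [hNN_lb ω]) (hNN_ub ω)
  -- integrals of indicator-type functions
  have hind : ∀ S : Set Ω, MeasurableSet S → S ⊆ Er →
      ∫ ω in Er, (S.indicator (fun _ => (1:ℝ))) ω ∂μ = (μ S).toReal := by
    intro S hS hSE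
    rw [setIntegral_indicator hS, setIntegral_const,
      Set.inter_eq_self_of_subset_right hSE]
    simp [measureReal_def]
  have hind_int : ∀ S : Set Ω, MeasurableSet S →
      IntegrableOn (fun ω => (S.indicator (fun _ => (1:ℝ))) ω) Er μ := by
    intro S hS
    refine hintb _ 1 (measurable_const.indicator hS) fun ω => ?_
    rw [Set.indicator_apply]
    split <;> simp
  have hcast_ind : ∀ (S : Set Ω) (ω : Ω),
      ((S.indicator (fun _ => (1:ℕ)) ω : ℕ) : ℝ) = S.indicator (fun _ => (1:ℝ)) ω := by
    intro S ω
    by_cases h : ω ∈ S <;> simp [h]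
  have toInt : ∀ {f : Ω → ℝ}, IntegrableOn f Er μ → Integrable f (μ.restrict Er) :=
    fun h => h
  have hCCsub : ∀ t, CC t ⊆ Er := by
    intro t; rw [hCCdef]; exact fun ω h => h.1.1
  have hUUsub : ∀ t, UU t ⊆ Er := by
    intro t; rw [hUUdef]; exact fun ω h => h.1
  -- bound for μ (UU K)
  have hUUreal : ∀ K : ℕ, (μ (UU (K+1))).toReal ≤ 1 / ((K:ℝ)+1) := by
    intro K
    have h1 := hUUbound (K+1)
    have h2 : (((K+1:ℕ) : ℝ≥0∞) * μ (UU (K+1))).toReal ≤ (1 : ℝ≥0∞).toReal :=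
      ENNReal.toReal_mono (by norm_num) h1
    rw [ENNReal.toReal_mul, ENNReal.toReal_natCast, ENNReal.toReal_one] at h2
    have h3 : ((K+1:ℕ):ℝ) = (K:ℝ) + 1 := by push_cast; ring
    rw [h3] at h2
    rw [le_div_iff₀ (by positivity)]
    nlinarith [ENNReal.toReal_nonneg (a := μ (UU (K+1)))]
  -- main integral bound for NN
  have hI1 : ∫ ω in Er, ((NN ω : ℕ) : ℝ) ∂μ ≤ qr := by
    refine le_of_forall_pos_le_add fun ε hε => ?_
    obtain ⟨K, hMK, hKe⟩ : ∃ K : ℕ, M ≤ K ∧ (M:ℝ) / ((K:ℝ)+1) ≤ ε := by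
      refine ⟨M + ⌈(M:ℝ)/ε⌉₊, Nat.le_add_right _ _, ?_⟩
      rw [div_le_iff₀ (by positivity)]
      have h1 : (M:ℝ)/ε ≤ (⌈(M:ℝ)/ε⌉₊ : ℝ) := Nat.le_ceil _
      have h2 : (M:ℝ)/ε ≤ ((M + ⌈(M:ℝ)/ε⌉₊ : ℕ):ℝ) + 1 := by
        push_cast; linarith
      calc (M:ℝ) = ((M:ℝ)/ε) * ε := by field_simp
        _ ≤ (((M + ⌈(M:ℝ)/ε⌉₊ : ℕ):ℝ)+1) * ε := mul_le_mul_of_nonneg_right h2 hε.le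
        _ = ε * (((M + ⌈(M:ℝ)/ε⌉₊ : ℕ):ℝ)+1) := by ring
    have hfint : IntegrableOn (fun ω =>
        (∑ t ∈ Finset.Icc 1 K, (CC t).indicator (fun _ => (1:ℝ)) ω) +
          (M:ℝ) * ((UU (K+1)).indicator (fun _ => (1:ℝ)) ω)) Er μ := by
      refine Integrable.add ?_ ?_
      · exact integrable_finset_sum _ fun t _ => toInt (hind_int (CC t) (hmeasCC t))
      · exact Integrable.const_mul (toInt (hind_int (UU (K+1)) (hmeasUU (K+1)))) _
    have hmono := setIntegral_mono_on hNN_int hfint hmeasEr (fun ω hω => by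
      have h := hptC K hMK ω hω
      have h' : ((NN ω : ℕ) : ℝ) ≤
          (∑ t ∈ Finset.Icc 1 K, (((CC t).indicator (fun _ => (1:ℕ)) ω : ℕ) : ℝ)) +
            (M:ℝ) * (((UU (K+1)).indicator (fun _ => (1:ℕ)) ω : ℕ) : ℝ) := by
        exact_mod_cast h
      simp_rw [hcast_ind] at h'
      exact h')
    have hcomp : ∫ ω in Er, ((∑ t ∈ Finset.Icc 1 K, (CC t).indicator (fun _ => (1:ℝ)) ω) +
          (M:ℝ) * ((UU (K+1)).indicator (fun _ => (1:ℝ)) ω)) ∂μ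
        = (∑ t ∈ Finset.Icc 1 K, (μ (CC t)).toReal) +
          (M:ℝ) * (μ (UU (K+1))).toReal := by
      rw [integral_add (integrable_finset_sum _ fun t _ => toInt (hind_int (CC t) (hmeasCC t)))
        (Integrable.const_mul (toInt (hind_int (UU (K+1)) (hmeasUU (K+1)))) _),
        integral_finset_sum _ fun t _ => toInt (hind_int (CC t) (hmeasCC t)),
        integral_const_mul, hind (UU (K+1)) (hmeasUU (K+1)) (hUUsub _)]
      congr 1
      exact Finset.sum_congr rfl fun t _ => hind (CC t) (hmeasCC t) (hCCsub t)
    have hsumCC : (∑ t ∈ Finset.Icc 1 K, (μ (CC t)).toReal) ≤ qr := by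
      rw [← ENNReal.toReal_sum (fun t _ => measure_ne_top μ _)]
      exact ENNReal.toReal_mono (measure_ne_top μ _) (hCCbound K)
    have hlast : (M:ℝ) * (μ (UU (K+1))).toReal ≤ ε := by
      calc (M:ℝ) * (μ (UU (K+1))).toReal ≤ (M:ℝ) * (1/((K:ℝ)+1)) := by
            refine mul_le_mul_of_nonneg_left (hUUreal K) (by positivity)
        _ = (M:ℝ) / ((K:ℝ)+1) := by ring
        _ ≤ ε := hKe
    calc ∫ ω in Er, ((NN ω : ℕ) : ℝ) ∂μ ≤ _ := hmono
      _ = _ := hcomp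
      _ ≤ qr + ε := add_le_add hsumCC hlast
  -- Jensen via the tangent line of log
  have hI2 : ∫ ω in Er, Real.logb 2 ((NN ω : ℕ) : ℝ) ∂μ ≤ pr * Real.logb 2 (qr/pr) := by
    set c := qr / pr with hc
    have hcpos : 0 < c := div_pos hqpos hprpos
    have hpt : ∀ ω, Real.log ((NN ω : ℕ) : ℝ) ≤ Real.log c + ((NN ω : ℕ) : ℝ)/c - 1 := by
      intro ω
      have h1 : (0:ℝ) < ((NN ω : ℕ) : ℝ) := by linarith [hNN_lb ω]
      have h2 := Real.log_le_sub_one_of_pos (div_pos h1 hcpos)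
      rw [Real.log_div h1.ne' hcpos.ne'] at h2
      linarith
    have hrhs_int : IntegrableOn (fun ω => Real.log c + ((NN ω : ℕ) : ℝ)/c - 1) Er μ :=
      ((integrable_const _).add (hNN_int.div_const c)).sub (integrable_const _)
    have h2 := setIntegral_mono_on hlog_int hrhs_int hmeasEr (fun ω _ => hpt ω)
    have hdivint : IntegrableOn (fun ω => ((NN ω : ℕ) : ℝ)/c) Er μ := hNN_int.div_const c
    have hsum1int : IntegrableOn (fun ω => Real.log c + ((NN ω : ℕ) : ℝ)/c) Er μ :=
      (integrable_const _).add hdivint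
    have hcomp : ∫ ω in Er, (Real.log c + ((NN ω : ℕ) : ℝ)/c - 1) ∂μ
        = pr * Real.log c + (∫ ω in Er, ((NN ω : ℕ) : ℝ) ∂μ)/c - pr := by
      rw [integral_sub hsum1int (integrable_const _),
        integral_add (integrable_const _) hdivint,
        integral_div, setIntegral_const, setIntegral_const, measureReal_def, hμErR]
      simp [mul_comm]
    have hdivle : (∫ ω in Er, ((NN ω : ℕ) : ℝ) ∂μ)/c ≤ qr/c := by gcongr
    have hqc : qr / c = pr := by rw [hc]; field_simp
    have h3 : ∫ ω in Er, Real.log ((NN ω : ℕ) : ℝ) ∂μ ≤ pr * Real.log c := by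
      rw [hcomp] at h2
      rw [hqc] at hdivle
      linarith
    have hlogb_eq : (fun ω => Real.logb 2 ((NN ω : ℕ) : ℝ))
        = fun ω => Real.log ((NN ω : ℕ) : ℝ) / Real.log 2 := by
      funext ω; rw [Real.logb]
    rw [hlogb_eq, integral_div]
    rw [show pr * Real.logb 2 c = pr * Real.log c / Real.log 2 by rw [Real.logb]; ring]
    gcongr
  -- final length bound
  have hI3 : ∫ ω in Er, (len ω : ℝ) ∂μ ≤ pr * (Nat.clog 2 (1+k) : ℝ) +
      pr * Real.logb 2 (qr/pr) + (k:ℝ) * (1/((M:ℝ)+1)) := by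
    have hrhs_int : IntegrableOn (fun ω => (Nat.clog 2 (1+k) : ℝ) +
        Real.logb 2 ((NN ω : ℕ) : ℝ) +
        (k:ℝ) * ((UU (M+1)).indicator (fun _ => (1:ℝ)) ω)) Er μ :=
      ((integrable_const _).add hlogb_int).add (Integrable.const_mul (toInt (hind_int (UU (M+1)) (hmeasUU (M+1)))) _)
    have h2 := setIntegral_mono_on hlen_int hrhs_int hmeasEr (fun ω hω => hptE ω hω)
    have hcomp : ∫ ω in Er, ((Nat.clog 2 (1+k) : ℝ) +
        Real.logb 2 ((NN ω : ℕ) : ℝ) +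
        (k:ℝ) * ((UU (M+1)).indicator (fun _ => (1:ℝ)) ω)) ∂μ
        = pr * (Nat.clog 2 (1+k) : ℝ) + (∫ ω in Er, Real.logb 2 ((NN ω : ℕ) : ℝ) ∂μ) +
          (k:ℝ) * (μ (UU (M+1))).toReal := by
      have hA : IntegrableOn (fun ω => (Nat.clog 2 (1+k) : ℝ) +
          Real.logb 2 ((NN ω : ℕ) : ℝ)) Er μ := (integrable_const _).add hlogb_int
      have hB : IntegrableOn (fun ω => (k:ℝ) *
          ((UU (M+1)).indicator (fun _ => (1:ℝ)) ω)) Er μ :=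
        Integrable.const_mul (toInt (hind_int (UU (M+1)) (hmeasUU (M+1)))) _
      rw [integral_add hA hB,
        integral_add (integrable_const _) hlogb_int,
        integral_const_mul, hind (UU (M+1)) (hmeasUU (M+1)) (hUUsub _),
        setIntegral_const, measureReal_def, hμErR]
      simp [mul_comm]
    have hUUM : (k:ℝ) * (μ (UU (M+1))).toReal ≤ (k:ℝ) * (1/((M:ℝ)+1)) :=
      mul_le_mul_of_nonneg_left (hUUreal M) (by positivity)
    rw [hcomp] at h2
    linarith [hI2]
  -- conclusion
  rw [hEeq, hμErR]
  rw [div_le_iff₀ hprpos]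
  have hneg : -Real.logb 2 (pr / qr) = Real.logb 2 (qr / pr) := by
    rw [show pr / qr = (qr / pr)⁻¹ by rw [inv_div], Real.logb_inv]
    ring
  have hMcast : (((M + 1 : ℕ)) : ℝ) = (M:ℝ) + 1 := by push_cast; ring
  have hexp : (-Real.logb 2 (pr / qr) + (Nat.clog 2 (1 + k) : ℝ) +
      (k : ℝ) / (((M + 1 : ℕ) : ℝ) * pr)) * pr
      = pr * (Nat.clog 2 (1+k) : ℝ) + pr * Real.logb 2 (qr/pr) + (k:ℝ) * (1/((M:ℝ)+1)) := by
    rw [hneg, hMcast]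
    field_simp
    ring
  rw [hexp]
  exact hI3
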